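/- Main theorem: Let X = X_F be a nearest-neighbor Z^2 subshift of finite type satisfying single-site fillability, and let f be its penalty function. Then there exists ε > 0 (one may take ε = 1/64) such that for every Lipschitz function g with ||f - g||_Lip < ε, every maximizing measure of g is supported on X. -/

import Mathlib

open scoped Classical
open MeasureTheory
open scoped ENNReal NNReal

/-- The shift action of `ℤ × ℤ` on configurations. -/
def shiftZ2 {A : Type*} (u : ℤ × ℤ) (x : ℤ × ℤ → A) : ℤ × ℤ → A := fun v => x (v + u)

/-- The nearest-neighbor SFT defined by horizontal forbidden pairs `Fh` and vertical
forbidden pairs `Fv`. -/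
def XF {A : Type*} (Fh Fv : Set (A × A)) : Set (ℤ × ℤ → A) :=
  {x | ∀ u : ℤ × ℤ, (x u, x (u + (1, 0))) ∉ Fh ∧ (x u, x (u + (0, 1))) ∉ Fv}

/-- The penalty function. -/
noncomputable def penalty {A : Type*} (Fh Fv : Set (A × A)) (x : ℤ × ℤ → A) : ℝ :=
  if (x 0, x (1, 0)) ∈ Fh ∨ (x 0, x (0, 1)) ∈ Fv then -1 else 0

/-- Single-site fillability. -/
def SSF {A : Type*} (Fh Fv : Set (A × A)) : Prop :=
  ∀ wr wl wu wd : A, ∃ a : A, (a, wr) ∉ Fh ∧ (wl, a) ∉ Fh ∧ (a, wu) ∉ Fv ∧ (wd, a) ∉ Fv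

/-- The metric `d(x,y) = 2^{-i}` with `i = inf {‖u‖_∞ : x_u ≠ y_u}`. -/
noncomputable def dmet {A : Type*} (x y : ℤ × ℤ → A) : ℝ :=
  if x = y then 0
  else (1 / 2 : ℝ) ^ sInf {n : ℕ | ∃ u : ℤ × ℤ, max u.1.natAbs u.2.natAbs = n ∧ x u ≠ y u}

namespace Stmt15Aux

variable {A : Type*}

/-- sup norm of a lattice site -/
def nrm (u : ℤ × ℤ) : ℕ := max u.1.natAbs u.2.natAbs

def badAt (Fh Fv : Set (A × A)) (x : ℤ × ℤ → A) (u : ℤ × ℤ) : Prop :=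
  (x u, x (u + (1, 0))) ∈ Fh ∨ (x u, x (u + (0, 1))) ∈ Fv

/-- the corner of the 2x2 block containing `w` -/
def blk (w : ℤ × ℤ) : ℤ × ℤ := (w.1 - w.1 % 2, w.2 - w.2 % 2)

def rnk (w : ℤ × ℤ) : ℕ := (w.1 % 2).toNat + 2 * (w.2 % 2).toNat

def dirty (Fh Fv : Set (A × A)) (x : ℤ × ℤ → A) (w : ℤ × ℤ) : Prop :=
  ∃ d : ℤ × ℤ, (-1 ≤ d.1 ∧ d.1 ≤ 2 ∧ -1 ≤ d.2 ∧ d.2 ≤ 2) ∧ badAt Fh Fv x (blk w + d)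

variable {Fh Fv : Set (A × A)}

noncomputable def pick (hssf : SSF Fh Fv) (wr wl wu wd : A) : A :=
  (hssf wr wl wu wd).choose

lemma pick_spec (hssf : SSF Fh Fv) (wr wl wu wd : A) :
    (pick hssf wr wl wu wd, wr) ∉ Fh ∧ (wl, pick hssf wr wl wu wd) ∉ Fh ∧
      (pick hssf wr wl wu wd, wu) ∉ Fv ∧ (wd, pick hssf wr wl wu wd) ∉ Fv :=
  (hssf wr wl wu wd).choose_spec

noncomputable def fillF (hssf : SSF Fh Fv) (x : ℤ × ℤ → A) : ℕ → (ℤ × ℤ → A)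
  | 0 => x
  | (k+1) => fun w =>
      if dirty Fh Fv x w ∧ rnk w = k then
        pick hssf (fillF hssf x k (w + (1, 0))) (fillF hssf x k (w - (1, 0)))
          (fillF hssf x k (w + (0, 1))) (fillF hssf x k (w - (0, 1)))
      else fillF hssf x k w

noncomputable def phi (hssf : SSF Fh Fv) (x : ℤ × ℤ → A) : ℤ × ℤ → A := fillF hssf x 4

lemma rnk_le_three (w : ℤ × ℤ) : rnk w ≤ 3 := by
  unfold rnk
  have h1 := Int.emod_two_eq_zero_or_one w.1
  have h2 := Int.emod_two_eq_zero_or_one w.2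
  rcases h1 with h1 | h1 <;> rcases h2 with h2 | h2 <;> simp [h1, h2]

lemma rnk_ne_right (w : ℤ × ℤ) : rnk w ≠ rnk (w + (1, 0)) := by
  unfold rnk
  have hs : (w + (1,0)).2 = w.2 := by simp
  have hf : (w + (1,0)).1 = w.1 + 1 := by simp
  rw [hs, hf]
  have h1 := Int.emod_two_eq_zero_or_one w.1
  have h3 : (w.1 + 1) % 2 = (w.1 % 2 + 1) % 2 := by omega
  rcases h1 with h1 | h1 <;> rw [h3, h1] <;> simp

lemma rnk_ne_up (w : ℤ × ℤ) : rnk w ≠ rnk (w + (0, 1)) := by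
  unfold rnk
  have hs : (w + (0,1)).1 = w.1 := by simp
  have hf : (w + (0,1)).2 = w.2 + 1 := by simp
  rw [hs, hf]
  have h1 := Int.emod_two_eq_zero_or_one w.2
  have h3 : (w.2 + 1) % 2 = (w.2 % 2 + 1) % 2 := by omega
  rcases h1 with h1 | h1 <;> rw [h3, h1] <;> simp

lemma fillF_of_not_dirty (hssf : SSF Fh Fv) (x : ℤ × ℤ → A) {w : ℤ × ℤ}
    (h : ¬ dirty Fh Fv x w) : ∀ k, fillF hssf x k w = x w := by
  intro k
  induction k with
  | zero => rfl
  | succ k ih => simp only [fillF]; rw [if_neg (by tauto)]; exact ih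

lemma fillF_stab (hssf : SSF Fh Fv) (x : ℤ × ℤ → A) {w : ℤ × ℤ} {k k' : ℕ}
    (h1 : rnk w < k) (h2 : k ≤ k') : fillF hssf x k' w = fillF hssf x k w := by
  induction k' with
  | zero => omega
  | succ k' ih =>
    rcases Nat.eq_or_lt_of_le h2 with h | h
    · rw [h]
    · have hk : k ≤ k' := by omega
      simp only [fillF]
      rw [if_neg (by rintro ⟨-, h'⟩; omega)]
      exact ih hk

lemma phi_eq_fill (hssf : SSF Fh Fv) (x : ℤ × ℤ → A) (w : ℤ × ℤ) :
    phi hssf x w = fillF hssf x (rnk w + 1) w :=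
  fillF_stab hssf x (Nat.lt_succ_self _) (by have := rnk_le_three w; omega)

lemma fillF_final (hssf : SSF Fh Fv) (x : ℤ × ℤ → A) {n : ℤ × ℤ} {k : ℕ}
    (h : ¬ dirty Fh Fv x n ∨ rnk n < k) : fillF hssf x k n = phi hssf x n := by
  rcases h with h | h
  · rw [fillF_of_not_dirty hssf x h, phi, fillF_of_not_dirty hssf x h]
  · rw [phi_eq_fill, fillF_stab hssf x (Nat.lt_succ_self _) h]

lemma badAt_of_dirty_self {x : ℤ × ℤ → A} {w : ℤ × ℤ}
    (h : badAt Fh Fv x w) : dirty Fh Fv x w := by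
  refine ⟨(w.1 % 2, w.2 % 2), ⟨by omega, by omega, by omega, by omega⟩, ?_⟩
  have : blk w + (w.1 % 2, w.2 % 2) = w := by
    unfold blk; ext <;> simp
  rwa [this]

lemma phi_dirty_eq (hssf : SSF Fh Fv) (x : ℤ × ℤ → A) {w : ℤ × ℤ}
    (h : dirty Fh Fv x w) :
    phi hssf x w = pick hssf (fillF hssf x (rnk w) (w + (1, 0)))
      (fillF hssf x (rnk w) (w - (1, 0))) (fillF hssf x (rnk w) (w + (0, 1)))
      (fillF hssf x (rnk w) (w - (0, 1))) := by
  rw [phi_eq_fill]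
  simp only [fillF]
  rw [if_pos ⟨h, trivial⟩]

lemma phi_mem (hssf : SSF Fh Fv) (x : ℤ × ℤ → A) : phi hssf x ∈ XF Fh Fv := by
  intro u
  constructor
  · -- horizontal edge (u, u + (1,0))
    set n := u + (1, 0) with hn
    by_cases du : dirty Fh Fv x u
    · by_cases dn : dirty Fh Fv x n
      · rcases (Ne.lt_or_gt (rnk_ne_right u)) with hlt | hlt
        · -- rnk u < rnk n : n was filled later, fed value of u
          have hval : fillF hssf x (rnk n) (n - (1, 0)) = phi hssf x u := by
            have : n - (1,0) = u := by rw [hn]; ring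
            rw [this]; exact fillF_final hssf x (Or.inr hlt)
          have := (pick_spec hssf (fillF hssf x (rnk n) (n + (1, 0)))
            (fillF hssf x (rnk n) (n - (1, 0))) (fillF hssf x (rnk n) (n + (0, 1)))
            (fillF hssf x (rnk n) (n - (0, 1)))).2.1
          rw [phi_dirty_eq hssf x dn, ← hval]
          exact this
        · -- rnk n < rnk u : u filled later, fed value of n
          have hval : fillF hssf x (rnk u) (u + (1, 0)) = phi hssf x n := by
            rw [← hn]; exact fillF_final hssf x (Or.inr hlt)
          rw [phi_dirty_eq hssf x du, hval]
          exact (pick_spec hssf _ _ _ _).1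
      · have hval : fillF hssf x (rnk u) (u + (1, 0)) = phi hssf x n := by
          rw [← hn]; exact fillF_final hssf x (Or.inl dn)
        rw [phi_dirty_eq hssf x du, hval]
        exact (pick_spec hssf _ _ _ _).1
    · by_cases dn : dirty Fh Fv x n
      · have hval : fillF hssf x (rnk n) (n - (1, 0)) = phi hssf x u := by
          have : n - (1,0) = u := by rw [hn]; ring
          rw [this]; exact fillF_final hssf x (Or.inl du)
        rw [phi_dirty_eq hssf x dn, ← hval]
        exact (pick_spec hssf _ _ _ _).2.1
      · rw [phi, fillF_of_not_dirty hssf x du, fillF_of_not_dirty hssf x dn]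
        intro hbad
        exact du (badAt_of_dirty_self (Or.inl hbad))
  · -- vertical edge (u, u + (0,1))
    set n := u + (0, 1) with hn
    by_cases du : dirty Fh Fv x u
    · by_cases dn : dirty Fh Fv x n
      · rcases (Ne.lt_or_gt (rnk_ne_up u)) with hlt | hlt
        · have hval : fillF hssf x (rnk n) (n - (0, 1)) = phi hssf x u := by
            have : n - (0,1) = u := by rw [hn]; ring
            rw [this]; exact fillF_final hssf x (Or.inr hlt)
          rw [phi_dirty_eq hssf x dn, ← hval]
          exact (pick_spec hssf _ _ _ _).2.2.2
        · have hval : fillF hssf x (rnk u) (u + (0, 1)) = phi hssf x n := by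
            rw [← hn]; exact fillF_final hssf x (Or.inr hlt)
          rw [phi_dirty_eq hssf x du, hval]
          exact (pick_spec hssf _ _ _ _).2.2.1
      · have hval : fillF hssf x (rnk u) (u + (0, 1)) = phi hssf x n := by
          rw [← hn]; exact fillF_final hssf x (Or.inl dn)
        rw [phi_dirty_eq hssf x du, hval]
        exact (pick_spec hssf _ _ _ _).2.2.1
    · by_cases dn : dirty Fh Fv x n
      · have hval : fillF hssf x (rnk n) (n - (0, 1)) = phi hssf x u := by
          have : n - (0,1) = u := by rw [hn]; ring
          rw [this]; exact fillF_final hssf x (Or.inl du)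
        rw [phi_dirty_eq hssf x dn, ← hval]
        exact (pick_spec hssf _ _ _ _).2.2.2
      · rw [phi, fillF_of_not_dirty hssf x du, fillF_of_not_dirty hssf x dn]
        intro hbad
        exact du (badAt_of_dirty_self (Or.inr hbad))


section Shift

lemma shift_shift (u w : ℤ × ℤ) (x : ℤ × ℤ → A) :
    shiftZ2 u (shiftZ2 w x) = shiftZ2 (u + w) x := by
  funext v; simp [shiftZ2, add_assoc]

lemma shift_zero (x : ℤ × ℤ → A) : shiftZ2 0 x = x := by
  funext v; simp [shiftZ2]

lemma badAt_shift (x : ℤ × ℤ → A) (t u : ℤ × ℤ) :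
    badAt Fh Fv (shiftZ2 t x) u ↔ badAt Fh Fv x (u + t) := by
  unfold badAt shiftZ2
  have h1 : u + (1, 0) + t = u + t + (1, 0) := by ring
  have h2 : u + (0, 1) + t = u + t + (0, 1) := by ring
  rw [h1, h2]

lemma blk_shift {t : ℤ × ℤ} (ht : t.1 % 2 = 0 ∧ t.2 % 2 = 0) (w : ℤ × ℤ) :
    blk (w + t) = blk w + t := by
  unfold blk
  have e1 : (w + t).1 = w.1 + t.1 := rfl
  have e2 : (w + t).2 = w.2 + t.2 := rfl
  rw [e1, e2]
  ext <;> simp <;> omega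

lemma rnk_shift {t : ℤ × ℤ} (ht : t.1 % 2 = 0 ∧ t.2 % 2 = 0) (w : ℤ × ℤ) :
    rnk (w + t) = rnk w := by
  unfold rnk
  have e1 : (w + t).1 = w.1 + t.1 := rfl
  have e2 : (w + t).2 = w.2 + t.2 := rfl
  rw [e1, e2]
  have : (w.1 + t.1) % 2 = w.1 % 2 := by omega
  have : (w.2 + t.2) % 2 = w.2 % 2 := by omega
  omega

lemma dirty_shift (x : ℤ × ℤ → A) {t : ℤ × ℤ} (ht : t.1 % 2 = 0 ∧ t.2 % 2 = 0)
    (w : ℤ × ℤ) : dirty Fh Fv (shiftZ2 t x) w ↔ dirty Fh Fv x (w + t) := by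
  unfold dirty
  constructor
  · rintro ⟨d, hd, hb⟩
    refine ⟨d, hd, ?_⟩
    rw [badAt_shift] at hb
    rwa [blk_shift ht, add_right_comm]
  · rintro ⟨d, hd, hb⟩
    refine ⟨d, hd, ?_⟩
    rw [badAt_shift, add_right_comm, ← blk_shift ht]
    exact hb

lemma fillF_shift (hssf : SSF Fh Fv) (x : ℤ × ℤ → A) {t : ℤ × ℤ}
    (ht : t.1 % 2 = 0 ∧ t.2 % 2 = 0) (k : ℕ) (w : ℤ × ℤ) :
    fillF hssf (shiftZ2 t x) k w = fillF hssf x k (w + t) := by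
  induction k generalizing w with
  | zero => rfl
  | succ k ih =>
    simp only [fillF]
    rw [dirty_shift x ht w, rnk_shift ht w]
    by_cases hc : dirty Fh Fv x (w + t) ∧ rnk (w + t) = k
    · rw [rnk_shift ht w] at hc
      rw [if_pos hc, if_pos hc, ih, ih, ih, ih]
      have h1 : w + (1,0) + t = w + t + (1,0) := by ring
      have h2 : w - (1,0) + t = w + t - (1,0) := by ring
      have h3 : w + (0,1) + t = w + t + (0,1) := by ring
      have h4 : w - (0,1) + t = w + t - (0,1) := by ring
      rw [h1, h2, h3, h4]
    · rw [rnk_shift ht w] at hc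
      rw [if_neg hc, if_neg hc, ih]

lemma phi_shift (hssf : SSF Fh Fv) (x : ℤ × ℤ → A) {t : ℤ × ℤ}
    (ht : t.1 % 2 = 0 ∧ t.2 % 2 = 0) :
    phi hssf (shiftZ2 t x) = shiftZ2 t (phi hssf x) := by
  funext w
  show fillF hssf (shiftZ2 t x) 4 w = (phi hssf x) (w + t)
  rw [fillF_shift hssf x ht]
  rfl

end Shift

section Local

lemma dirty_near {x : ℤ × ℤ → A} {w : ℤ × ℤ} (h : dirty Fh Fv x w) :
    ∃ u : ℤ × ℤ, badAt Fh Fv x u ∧ u.1.natAbs ≤ w.1.natAbs + 2 ∧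
      u.2.natAbs ≤ w.2.natAbs + 2 := by
  obtain ⟨d, hd, hb⟩ := h
  refine ⟨blk w + d, hb, ?_, ?_⟩
  · have e : (blk w + d).1 = (w.1 - w.1 % 2) + d.1 := rfl
    omega
  · have e : (blk w + d).2 = (w.2 - w.2 % 2) + d.2 := rfl
    omega

lemma phi_ne_dirty (hssf : SSF Fh Fv) (x : ℤ × ℤ → A) {w : ℤ × ℤ}
    (h : phi hssf x w ≠ x w) : dirty Fh Fv x w := by
  by_contra hd
  exact h (by rw [phi, fillF_of_not_dirty hssf x hd])

lemma phi_eq_of_no_bad (hssf : SSF Fh Fv) (x : ℤ × ℤ → A)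
    (h : ∀ u, ¬ badAt Fh Fv x u) : phi hssf x = x := by
  funext w
  by_contra hne
  obtain ⟨d, hd, hb⟩ := phi_ne_dirty hssf x hne
  exact h _ hb

end Local


section Meas
set_option linter.unusedSectionVars false

variable [Fintype A] [TopologicalSpace A] [DiscreteTopology A]
  [MeasurableSpace A] [BorelSpace A]

lemma measSet (s : Set A) : MeasurableSet s := (isOpen_discrete s).measurableSet

lemma measSet2 (s : Set (A × A)) : MeasurableSet s := (isOpen_discrete s).measurableSet

lemma measurable_pair (a b : ℤ × ℤ) :
    Measurable (fun x : ℤ × ℤ → A => (x a, x b)) :=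
  (measurable_pi_apply a).prodMk (measurable_pi_apply b)

lemma measurable_badAt (u : ℤ × ℤ) :
    MeasurableSet {x : ℤ × ℤ → A | badAt Fh Fv x u} := by
  have : {x : ℤ × ℤ → A | badAt Fh Fv x u} =
      (fun x : ℤ × ℤ → A => (x u, x (u + (1,0)))) ⁻¹' Fh ∪
      (fun x : ℤ × ℤ → A => (x u, x (u + (0,1)))) ⁻¹' Fv := rfl
  rw [this]
  exact ((measurable_pair _ _) (measSet2 Fh)).union ((measurable_pair _ _) (measSet2 Fv))

lemma measurable_dirty (w : ℤ × ℤ) :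
    MeasurableSet {x : ℤ × ℤ → A | dirty Fh Fv x w} := by
  have : {x : ℤ × ℤ → A | dirty Fh Fv x w} =
      ⋃ (d : ℤ × ℤ) (_ : -1 ≤ d.1 ∧ d.1 ≤ 2 ∧ -1 ≤ d.2 ∧ d.2 ≤ 2),
        {x : ℤ × ℤ → A | badAt Fh Fv x (blk w + d)} := by
    ext x; simp [dirty, Set.mem_iUnion]
  rw [this]
  exact MeasurableSet.iUnion fun d => MeasurableSet.iUnion fun _ => measurable_badAt _

lemma measurable_pick_comp (hssf : SSF Fh Fv)
    {f1 f2 f3 f4 : (ℤ × ℤ → A) → A} (h1 : Measurable f1) (h2 : Measurable f2)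
    (h3 : Measurable f3) (h4 : Measurable f4) :
    Measurable (fun x => pick hssf (f1 x) (f2 x) (f3 x) (f4 x)) := by
  apply measurable_to_countable'
  intro a
  have : (fun x => pick hssf (f1 x) (f2 x) (f3 x) (f4 x)) ⁻¹' {a} =
      ⋃ (b : A × A × A × A) (_ : pick hssf b.1 b.2.1 b.2.2.1 b.2.2.2 = a),
        (f1 ⁻¹' {b.1} ∩ f2 ⁻¹' {b.2.1} ∩ f3 ⁻¹' {b.2.2.1} ∩ f4 ⁻¹' {b.2.2.2}) := by
    ext x
    simp only [Set.mem_preimage, Set.mem_singleton_iff, Set.mem_iUnion, Set.mem_inter_iff]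
    constructor
    · intro hx
      exact ⟨(f1 x, f2 x, f3 x, f4 x), hx, ⟨⟨rfl, rfl⟩, rfl⟩, rfl⟩
    · rintro ⟨⟨b1, b2, b3, b4⟩, hb, ⟨⟨e1, e2⟩, e3⟩, e4⟩
      simp only [Set.mem_singleton_iff] at e1 e2 e3 e4
      rw [e1, e2, e3, e4]; exact hb
  rw [this]
  refine MeasurableSet.iUnion fun b => MeasurableSet.iUnion fun _ => ?_
  exact (((h1 (measSet _)).inter (h2 (measSet _))).inter (h3 (measSet _))).inter
    (h4 (measSet _))

lemma measurable_fillF (hssf : SSF Fh Fv) (k : ℕ) (w : ℤ × ℤ) :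
    Measurable (fun x : ℤ × ℤ → A => fillF hssf x k w) := by
  induction k generalizing w with
  | zero => exact measurable_pi_apply w
  | succ k ih =>
    simp only [fillF]
    refine Measurable.ite ?_ (measurable_pick_comp hssf (ih _) (ih _) (ih _) (ih _)) (ih _)
    by_cases hr : rnk w = k
    · simpa [hr] using measurable_dirty (Fh := Fh) (Fv := Fv) w
    · simp [hr]

lemma measurable_phi (hssf : SSF Fh Fv) : Measurable (phi hssf) :=
  measurable_pi_iff.mpr fun w => measurable_fillF hssf 4 w

lemma measurable_shift (u : ℤ × ℤ) : Measurable (shiftZ2 (A := A) u) :=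
  measurable_pi_iff.mpr fun v => measurable_pi_apply (v + u)

lemma measurable_Bset :
    MeasurableSet {y : ℤ × ℤ → A | (y 0, y (1, 0)) ∈ Fh ∨ (y 0, y (0, 1)) ∈ Fv} := by
  have : {y : ℤ × ℤ → A | (y 0, y (1, 0)) ∈ Fh ∨ (y 0, y (0, 1)) ∈ Fv} =
      (fun y : ℤ × ℤ → A => (y 0, y (1,0))) ⁻¹' Fh ∪
      (fun y : ℤ × ℤ → A => (y 0, y (0,1))) ⁻¹' Fv := rfl
  rw [this]
  exact ((measurable_pair _ _) (measSet2 Fh)).union ((measurable_pair _ _) (measSet2 Fv))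

lemma measurable_penalty : Measurable (penalty Fh Fv) := by
  unfold penalty
  exact Measurable.ite measurable_Bset measurable_const measurable_const

end Meas


section Dmet

lemma dmet_self (x : ℤ × ℤ → A) : dmet x x = 0 := by simp [dmet]

lemma dmet_nonneg (x y : ℤ × ℤ → A) : 0 ≤ dmet x y := by
  unfold dmet; split_ifs <;> positivity

lemma dmet_le {x y : ℤ × ℤ → A} {n : ℕ} (h : ∀ w, x w ≠ y w → n ≤ nrm w) :
    dmet x y ≤ (1 / 2 : ℝ) ^ n := by
  unfold dmet
  split_ifs with hxy
  · positivity
  · apply pow_le_pow_of_le_one (by norm_num) (by norm_num)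
    have hne : {m : ℕ | ∃ u : ℤ × ℤ, max u.1.natAbs u.2.natAbs = m ∧ x u ≠ y u}.Nonempty := by
      have : ∃ u, x u ≠ y u := by
        by_contra hc; push_neg at hc; exact hxy (funext hc)
      obtain ⟨u, hu⟩ := this
      exact ⟨nrm u, u, rfl, hu⟩
    obtain ⟨u, hu, hne'⟩ := Nat.sInf_mem hne
    rw [← hu]
    exact h u hne'

noncomputable def boxF (n : ℕ) : Finset (ℤ × ℤ) :=
  (Finset.Icc (-(n : ℤ)) n) ×ˢ (Finset.Icc (-(n : ℤ)) n)

lemma mem_boxF {n : ℕ} {w : ℤ × ℤ} : w ∈ boxF n ↔ nrm w ≤ n := by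
  unfold boxF nrm
  rw [Finset.mem_product, Finset.mem_Icc, Finset.mem_Icc]
  omega

lemma card_boxF (n : ℕ) : (boxF n).card = (2 * n + 1) ^ 2 := by
  unfold boxF
  rw [Finset.card_product, Int.card_Icc]
  have : ((n : ℤ) + 1 - -(n : ℤ)).toNat = 2 * n + 1 := by omega
  rw [this]; ring

lemma lip_cont [TopologicalSpace A] [DiscreteTopology A] {q : (ℤ × ℤ → A) → ℝ} {K : ℝ}
    (hK : 0 ≤ K) (hq : ∀ x y, |q x - q y| ≤ K * dmet x y) : Continuous q := by
  rw [continuous_iff_continuousAt]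
  intro x
  apply Metric.tendsto_nhds.mpr
  intro ε hε
  have hex : ∃ n : ℕ, K * (1 / 2 : ℝ) ^ n < ε := by
    rcases eq_or_lt_of_le hK with h0 | h0
    · exact ⟨0, by rw [← h0]; simpa using hε⟩
    · obtain ⟨n, hn⟩ := exists_pow_lt_of_lt_one (div_pos hε h0) (by norm_num : (1/2 : ℝ) < 1)
      exact ⟨n, by rwa [← lt_div_iff₀' h0]⟩
  obtain ⟨n, hn⟩ := hex
  have hmem : (⋂ w ∈ boxF n, (fun y : ℤ × ℤ → A => y w) ⁻¹' {x w}) ∈ nhds x := by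
    apply IsOpen.mem_nhds
    · exact isOpen_biInter_finset fun w _ =>
        (continuous_apply w).isOpen_preimage _ (isOpen_discrete _)
    · simp
  filter_upwards [hmem] with y hy
  simp only [Set.mem_iInter, Set.mem_preimage, Set.mem_singleton_iff] at hy
  have hd : dmet y x ≤ (1 / 2 : ℝ) ^ n := by
    apply dmet_le
    intro w hw
    by_contra hc
    push_neg at hc
    exact hw (hy w (mem_boxF.mpr (by omega)))
  calc dist (q y) (q x) = |q y - q x| := Real.dist_eq _ _
    _ ≤ K * dmet y x := hq y x
    _ ≤ K * (1 / 2 : ℝ) ^ n := mul_le_mul_of_nonneg_left hd hK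
    _ < ε := hn

end Dmet


section MeasureSide

set_option linter.unusedSectionVars false

variable [Fintype A] [TopologicalSpace A] [DiscreteTopology A]
  [MeasurableSpace A] [BorelSpace A]

def Bs (Fh Fv : Set (A × A)) : Set (ℤ × ℤ → A) :=
  {y | (y 0, y (1, 0)) ∈ Fh ∨ (y 0, y (0, 1)) ∈ Fv}

lemma measurable_Bs : MeasurableSet (Bs Fh Fv) := measurable_Bset

lemma badAt_iff_shift_mem (x : ℤ × ℤ → A) (u : ℤ × ℤ) :
    badAt Fh Fv x u ↔ shiftZ2 u x ∈ Bs Fh Fv := by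
  unfold badAt Bs shiftZ2
  simp only [Set.mem_setOf_eq, zero_add]
  rw [add_comm u (1,0), add_comm u (0,1)]

lemma penalty_eq_indicator :
    penalty Fh Fv = Set.indicator (Bs Fh Fv) (fun _ => (-1 : ℝ)) := by
  funext y
  by_cases h : y ∈ Bs Fh Fv
  · rw [Set.indicator_of_mem h]; exact if_pos h
  · rw [Set.indicator_of_notMem h]; exact if_neg h

lemma penalty_zero_of_mem {y : ℤ × ℤ → A} (h : y ∈ XF Fh Fv) : penalty Fh Fv y = 0 := by
  have h0 := h 0
  rw [zero_add, zero_add] at h0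
  exact if_neg (by tauto)

lemma XF_shift {y : ℤ × ℤ → A} (h : y ∈ XF Fh Fv) (v : ℤ × ℤ) :
    shiftZ2 v y ∈ XF Fh Fv := by
  intro u
  have h1 : u + (1, 0) + v = u + v + (1, 0) := by ring
  have h2 : u + (0, 1) + v = u + v + (0, 1) := by ring
  constructor
  · show (y (u + v), y (u + (1,0) + v)) ∉ Fh
    rw [h1]; exact (h (u + v)).1
  · show (y (u + v), y (u + (0,1) + v)) ∉ Fv
    rw [h2]; exact (h (u + v)).2

/-- `badWithin x n` : some site of sup-norm at most `n` sees a forbidden pattern. -/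
def bw (Fh Fv : Set (A × A)) (x : ℤ × ℤ → A) (n : ℕ) : Prop :=
  ∃ u : ℤ × ℤ, nrm u ≤ n ∧ badAt Fh Fv x u

lemma measurable_bw (n : ℕ) : MeasurableSet {x : ℤ × ℤ → A | bw Fh Fv x n} := by
  have : {x : ℤ × ℤ → A | bw Fh Fv x n} =
      ⋃ (u : ℤ × ℤ) (_ : nrm u ≤ n), {x : ℤ × ℤ → A | badAt Fh Fv x u} := by
    ext x; simp [bw, Set.mem_iUnion]
  rw [this]
  exact MeasurableSet.iUnion fun u => MeasurableSet.iUnion fun _ => measurable_badAt u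

/-- The weight function controlling distance to the nearest defect. -/
noncomputable def Pw (Fh Fv : Set (A × A)) (x : ℤ × ℤ → A) : ℝ≥0∞ :=
  ∑' n : ℕ, (2⁻¹ : ℝ≥0∞) ^ n * Set.indicator {y : ℤ × ℤ → A | bw Fh Fv y n} 1 x

lemma natGrowth (n : ℕ) : (2*n+1)^2 * 2^n ≤ 16 * 3^n := by
  induction n with
  | zero => norm_num
  | succ k ih =>
    rcases Nat.lt_or_ge k 4 with h | h
    · interval_cases k <;> norm_num
    · have h2 : 2*(2*(k+1)+1)^2 ≤ 3*(2*k+1)^2 := by nlinarith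
      calc (2*(k+1)+1)^2 * 2^(k+1) = 2*(2*(k+1)+1)^2 * 2^k := by ring
        _ ≤ 3*(2*k+1)^2 * 2^k := Nat.mul_le_mul_right _ h2
        _ = 3*((2*k+1)^2 * 2^k) := by ring
        _ ≤ 3*(16*3^k) := Nat.mul_le_mul_left _ ih
        _ = 16 * 3^(k+1) := by ring

lemma ennreal_growth (n : ℕ) :
    (2⁻¹ : ℝ≥0∞) ^ n * ((2*n+1)^2 : ℕ) ≤ 16 * (3 * 4⁻¹ : ℝ≥0∞) ^ n := by
  have h4 : ((4 : ℝ≥0∞) ^ n) ≠ 0 := by positivity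
  have h4' : ((4 : ℝ≥0∞) ^ n) ≠ ∞ := by
    exact ENNReal.pow_ne_top (by norm_num)
  rw [← ENNReal.mul_le_mul_iff_left h4 h4']
  have e1 : (2⁻¹ : ℝ≥0∞) ^ n * ((2*n+1)^2 : ℕ) * 4 ^ n
      = ((2*n+1)^2 : ℕ) * 2 ^ n := by
    have h24 : (2⁻¹ : ℝ≥0∞) * 4 = 2 := by
      have : (4 : ℝ≥0∞) = 2 * 2 := by norm_num
      rw [this, ← mul_assoc, ENNReal.inv_mul_cancel (by norm_num) (by norm_num), one_mul]
    rw [mul_right_comm, ← mul_pow, h24, mul_comm]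
  have e2 : (16 : ℝ≥0∞) * (3 * 4⁻¹) ^ n * 4 ^ n = 16 * 3 ^ n := by
    rw [mul_assoc, ← mul_pow, mul_assoc, ENNReal.inv_mul_cancel (by norm_num) (by norm_num),
      mul_one]
  rw [e1, e2]
  have := natGrowth n
  calc ((2*n+1)^2 : ℕ) * (2:ℝ≥0∞) ^ n = (((2*n+1)^2 * 2^n : ℕ) : ℝ≥0∞) := by push_cast; ring
    _ ≤ ((16 * 3^n : ℕ) : ℝ≥0∞) := by exact_mod_cast this
    _ = 16 * 3 ^ n := by push_cast; ring

lemma tsum_growth : (∑' n : ℕ, (2⁻¹ : ℝ≥0∞) ^ n * ((2*n+1)^2 : ℕ)) ≤ 64 := by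
  calc (∑' n : ℕ, (2⁻¹ : ℝ≥0∞) ^ n * ((2*n+1)^2 : ℕ))
      ≤ ∑' n : ℕ, (16 : ℝ≥0∞) * (3 * 4⁻¹) ^ n := ENNReal.tsum_le_tsum ennreal_growth
    _ = 16 * ∑' n : ℕ, (3 * 4⁻¹ : ℝ≥0∞) ^ n := ENNReal.tsum_mul_left
    _ = 16 * (1 - 3 * 4⁻¹)⁻¹ := by rw [ENNReal.tsum_geometric]
    _ = 64 := by
        have hs : (1 : ℝ≥0∞) - 3 * 4⁻¹ = 4⁻¹ := by
          apply ENNReal.sub_eq_of_eq_add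
            (ENNReal.mul_ne_top (by norm_num) (ENNReal.inv_ne_top.mpr (by norm_num)))
          calc (1:ℝ≥0∞) = 4 * 4⁻¹ := (ENNReal.mul_inv_cancel (by norm_num) (by norm_num)).symm
            _ = 4⁻¹ + 3 * 4⁻¹ := by ring
        rw [hs, inv_inv]
        norm_num

lemma lint_Pw {μ : Measure (ℤ × ℤ → A)}
    (hinv : ∀ u : ℤ × ℤ, Measure.map (shiftZ2 u) μ = μ) :
    ∫⁻ x, Pw Fh Fv x ∂μ ≤ 64 * μ (Bs Fh Fv) := by
  have hmu_bad : ∀ u : ℤ × ℤ, μ {x | badAt Fh Fv x u} = μ (Bs Fh Fv) := by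
    intro u
    have : {x : ℤ × ℤ → A | badAt Fh Fv x u} = (shiftZ2 u) ⁻¹' (Bs Fh Fv) := by
      ext x; exact badAt_iff_shift_mem x u
    rw [this, ← Measure.map_apply (measurable_shift u) measurable_Bs, hinv u]
  have hbw : ∀ n : ℕ, μ {x | bw Fh Fv x n} ≤ ((2*n+1)^2 : ℕ) * μ (Bs Fh Fv) := by
    intro n
    have hsub : {x : ℤ × ℤ → A | bw Fh Fv x n} ⊆
        ⋃ u ∈ boxF n, {x : ℤ × ℤ → A | badAt Fh Fv x u} := by
      rintro x ⟨u, hu, hb⟩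
      exact Set.mem_biUnion (mem_boxF.mpr hu) hb
    calc μ {x | bw Fh Fv x n} ≤ ∑ u ∈ boxF n, μ {x | badAt Fh Fv x u} :=
          le_trans (measure_mono hsub) (measure_biUnion_finset_le _ _)
      _ = ∑ u ∈ boxF n, μ (Bs Fh Fv) := by simp only [hmu_bad]
      _ = ((2*n+1)^2 : ℕ) * μ (Bs Fh Fv) := by
          rw [Finset.sum_const, card_boxF, nsmul_eq_mul]
  calc ∫⁻ x, Pw Fh Fv x ∂μ
      = ∑' n : ℕ, ∫⁻ x, (2⁻¹ : ℝ≥0∞) ^ n *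
          Set.indicator {y : ℤ × ℤ → A | bw Fh Fv y n} 1 x ∂μ := by
        unfold Pw
        exact lintegral_tsum fun n =>
          ((measurable_const.indicator (measurable_bw n)).const_mul _).aemeasurable
    _ = ∑' n : ℕ, (2⁻¹ : ℝ≥0∞) ^ n * μ {y | bw Fh Fv y n} := by
        congr 1; funext n
        rw [lintegral_const_mul' _ _
          (ENNReal.pow_ne_top (ENNReal.inv_ne_top.mpr (by norm_num))),
          lintegral_indicator_one (measurable_bw n)]
    _ ≤ ∑' n : ℕ, (2⁻¹ : ℝ≥0∞) ^ n * (((2*n+1)^2 : ℕ) * μ (Bs Fh Fv)) :=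
        ENNReal.tsum_le_tsum fun n => mul_le_mul_right (hbw n) _
    _ = (∑' n : ℕ, (2⁻¹ : ℝ≥0∞) ^ n * ((2*n+1)^2 : ℕ)) * μ (Bs Fh Fv) := by
        rw [← ENNReal.tsum_mul_right]
        congr 1; funext n; ring
    _ ≤ 64 * μ (Bs Fh Fv) := mul_le_mul_left tsum_growth _


lemma key_pointwise (hssf : SSF Fh Fv) {q : (ℤ × ℤ → A) → ℝ} {K : ℝ} (hK : 0 ≤ K)
    (hq : ∀ a b, |q a - q b| ≤ K * dmet a b) {v : ℤ × ℤ} (hv : nrm v ≤ 1)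
    (x : ℤ × ℤ → A) :
    ENNReal.ofReal |q (shiftZ2 v (phi hssf x)) - q (shiftZ2 v x)| ≤
      ENNReal.ofReal K * 8 * Pw Fh Fv x := by
  by_cases hphi : phi hssf x = x
  · rw [hphi, sub_self, abs_zero, ENNReal.ofReal_zero]; exact zero_le
  · have hbad : ∃ u, badAt Fh Fv x u := by
      by_contra hc; push_neg at hc; exact hphi (phi_eq_of_no_bad hssf x hc)
    have hMne : {n : ℕ | bw Fh Fv x n}.Nonempty := by
      obtain ⟨u, hu⟩ := hbad; exact ⟨nrm u, u, le_refl _, hu⟩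
    set m := sInf {n : ℕ | bw Fh Fv x n} with hm
    have hmm : bw Fh Fv x m := Nat.sInf_mem hMne
    have hdist : dmet (shiftZ2 v (phi hssf x)) (shiftZ2 v x) ≤ (1/2 : ℝ)^(m - 3) := by
      apply dmet_le
      intro w hw
      have hne : phi hssf x (w + v) ≠ x (w + v) := hw
      obtain ⟨u, hb, h1, h2⟩ := dirty_near (phi_ne_dirty hssf x hne)
      have hle : m ≤ nrm w + 3 := by
        apply Nat.sInf_le
        refine ⟨u, ?_, hb⟩
        have e1 : (w + v).1 = w.1 + v.1 := rfl
        have e2 : (w + v).2 = w.2 + v.2 := rfl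
        rw [e1] at h1; rw [e2] at h2
        have hv1 : v.1.natAbs ≤ 1 := le_trans (le_max_left _ _) hv
        have hv2 : v.2.natAbs ≤ 1 := le_trans (le_max_right _ _) hv
        unfold nrm at *
        omega
      omega
    have hpow : (1/2 : ℝ)^(m - 3) ≤ 8 * (1/2 : ℝ)^m := by
      rcases Nat.lt_or_ge m 3 with h | h
      · have h0 : m - 3 = 0 := by omega
        have h2 : (1/2 : ℝ)^2 ≤ (1/2 : ℝ)^m :=
          pow_le_pow_of_le_one (by norm_num) (by norm_num) (by omega)
        rw [h0, pow_zero]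
        nlinarith
      · have he : m - 3 + 3 = m := by omega
        have hrw : (1/2 : ℝ)^m = (1/2 : ℝ)^(m-3) * (1/2 : ℝ)^3 := by rw [← pow_add, he]
        rw [hrw]
        nlinarith [pow_nonneg (by norm_num : (0:ℝ) ≤ 1/2) (m - 3)]
    have habs : |q (shiftZ2 v (phi hssf x)) - q (shiftZ2 v x)| ≤ K * (8 * (1/2 : ℝ)^m) :=
      le_trans (hq _ _) (by
        have := mul_le_mul_of_nonneg_left (le_trans hdist hpow) hK
        linarith)
    have hterm : (2⁻¹ : ℝ≥0∞)^m ≤ Pw Fh Fv x := by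
      have hle := ENNReal.le_tsum (a := m)
        (f := fun n => (2⁻¹ : ℝ≥0∞)^n * Set.indicator {y : ℤ × ℤ → A | bw Fh Fv y n} 1 x)
      have hx : x ∈ {y : ℤ × ℤ → A | bw Fh Fv y m} := hmm
      rw [Set.indicator_of_mem hx] at hle
      simpa [Pw] using hle
    calc ENNReal.ofReal |q (shiftZ2 v (phi hssf x)) - q (shiftZ2 v x)|
        ≤ ENNReal.ofReal (K * (8 * (1/2 : ℝ)^m)) := ENNReal.ofReal_le_ofReal habs
      _ = ENNReal.ofReal K * (8 * (2⁻¹ : ℝ≥0∞)^m) := by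
          rw [ENNReal.ofReal_mul hK]
          congr 1
          rw [ENNReal.ofReal_mul (by norm_num), ENNReal.ofReal_pow (by norm_num)]
          have : ENNReal.ofReal (1/2) = (2⁻¹ : ℝ≥0∞) := by
            rw [one_div, ENNReal.ofReal_inv_of_pos (by norm_num)]
            norm_num
          rw [this]
          norm_num
      _ ≤ ENNReal.ofReal K * (8 * Pw Fh Fv x) :=
          mul_le_mul_right (mul_le_mul_right hterm _) _
      _ = ENNReal.ofReal K * 8 * Pw Fh Fv x := by ring

end MeasureSide

end Stmt15Aux


open Stmt15Aux

/-- Main theorem: stability of the penalty function of a nearest-neighbor `ℤ²` SFT with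
single-site fillability under Lipschitz perturbations. -/
theorem stmt15 {A : Type*} [Fintype A] [TopologicalSpace A] [DiscreteTopology A]
    [MeasurableSpace A] [BorelSpace A]
    (Fh Fv : Set (A × A)) (hssf : SSF Fh Fv) :
    ∃ ε > (0 : ℝ), ∀ g : (ℤ × ℤ → A) → ℝ,
      (∃ C K : ℝ, 0 ≤ C ∧ 0 ≤ K ∧
        (∀ x : ℤ × ℤ → A, |penalty Fh Fv x - g x| ≤ C) ∧
        (∀ x y : ℤ × ℤ → A,
          |(penalty Fh Fv x - g x) - (penalty Fh Fv y - g y)| ≤ K * dmet x y) ∧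
        C + K < ε) →
      ∀ μ : Measure (ℤ × ℤ → A), IsProbabilityMeasure μ →
        (∀ u : ℤ × ℤ, Measure.map (shiftZ2 u) μ = μ) →
        (∀ ν : Measure (ℤ × ℤ → A), IsProbabilityMeasure ν →
          (∀ u : ℤ × ℤ, Measure.map (shiftZ2 u) ν = ν) →
          ∫ x, g x ∂ν ≤ ∫ x, g x ∂μ) →
        μ (XF Fh Fv)ᶜ = 0 := by
  refine ⟨1/1024, by norm_num, ?_⟩
  rintro g ⟨C, K, hC0, hK0, hC, hKlip, hCK⟩ μ hμp hμinv hmax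
  haveI := hμp
  set q : (ℤ × ℤ → A) → ℝ := fun x => penalty Fh Fv x - g x with hqdef
  have hqK : ∀ a b, |q a - q b| ≤ K * dmet a b := hKlip
  have hqb : ∀ x, |q x| ≤ C := hC
  have hqcont : Continuous q := lip_cont hK0 hqK
  have hqmeas : Measurable q := hqcont.measurable
  have hpmeas : Measurable (penalty Fh Fv) := measurable_penalty
  have hgmeas : Measurable g := by
    have h : (fun x => penalty Fh Fv x - q x) = g := by
      funext x; rw [hqdef]; ring
    rw [← h]; exact hpmeas.sub hqmeas
  have hpb : ∀ x, |penalty Fh Fv x| ≤ 1 := by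
    intro x; unfold penalty; split_ifs <;> norm_num
  have hgb : ∀ x, |g x| ≤ 1 + C := by
    intro x
    calc |g x| = |penalty Fh Fv x + -(q x)| := by rw [hqdef]; congr 1; ring
      _ ≤ |penalty Fh Fv x| + |q x| := by rw [← abs_neg (q x)] at *; exact abs_add_le _ _
      _ ≤ 1 + C := add_le_add (hpb x) (hqb x)
  -- integrability of bounded measurable functions
  have int_bdd : ∀ (f : (ℤ × ℤ → A) → ℝ) (M : ℝ), Measurable f → (∀ x, |f x| ≤ M) →
      ∀ (ρ : Measure (ℤ × ℤ → A)), IsFiniteMeasure ρ → Integrable f ρ := by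
    intro f M hf hM ρ hρ
    exact Integrable.mono' (integrable_const M) hf.aestronglyMeasurable
      (ae_of_all _ fun x => by simpa [Real.norm_eq_abs] using hM x)
  -- the repaired measures
  set φ := phi hssf with hφdef
  have hφm : Measurable φ := measurable_phi hssf
  have hcomp_meas : ∀ v : ℤ × ℤ, Measurable (shiftZ2 v ∘ φ) :=
    fun v => (measurable_shift v).comp hφm
  set m : ℤ × ℤ → Measure (ℤ × ℤ → A) :=
    fun v => Measure.map (shiftZ2 v ∘ φ) μ with hmdef
  have hm_prob : ∀ v, IsProbabilityMeasure (m v) :=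
    fun v => Measure.isProbabilityMeasure_map (hcomp_meas v).aemeasurable
  set ν := (4 : ℝ≥0∞)⁻¹ • (m (0,0) + m (1,0) + m (0,1) + m (1,1)) with hνdef
  have hν_prob : IsProbabilityMeasure ν := by
    constructor
    rw [hνdef]
    rw [Measure.smul_apply, Measure.add_apply, Measure.add_apply, Measure.add_apply,
      (hm_prob (0,0)).measure_univ, (hm_prob (1,0)).measure_univ,
      (hm_prob (0,1)).measure_univ, (hm_prob (1,1)).measure_univ]
    have h4 : (1 + 1 + 1 + 1 : ℝ≥0∞) = 4 := by norm_num
    rw [h4, smul_eq_mul]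
    exact ENNReal.inv_mul_cancel (by norm_num) (by norm_num)
  have hm_shift : ∀ e v : ℤ × ℤ, Measure.map (shiftZ2 e) (m v) = m (e + v) := by
    intro e v
    rw [hmdef, Measure.map_map (measurable_shift e) (hcomp_meas v)]
    congr 1
    funext x
    exact shift_shift e v (φ x)
  have hm_even : ∀ (v t : ℤ × ℤ), t.1 % 2 = 0 → t.2 % 2 = 0 → m (v + t) = m v := by
    intro v t h1 h2
    have hc : shiftZ2 (v + t) ∘ φ = (shiftZ2 v ∘ φ) ∘ shiftZ2 t := by
      funext x
      show shiftZ2 (v + t) (φ x) = shiftZ2 v (φ (shiftZ2 t x))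
      rw [hφdef, phi_shift hssf x ⟨h1, h2⟩, shift_shift]
    show Measure.map (shiftZ2 (v+t) ∘ φ) μ = m v
    rw [hc, ← Measure.map_map (hcomp_meas v) (measurable_shift t), hμinv t]
  have hid : shiftZ2 (A := A) (0 : ℤ × ℤ) = id := funext shift_zero
  have hν10 : Measure.map (shiftZ2 (1,0)) ν = ν := by
    rw [hνdef, Measure.map_smul,
      Measure.map_add _ _ (measurable_shift _), Measure.map_add _ _ (measurable_shift _),
      Measure.map_add _ _ (measurable_shift _),
      hm_shift, hm_shift, hm_shift, hm_shift]
    have e1 : ((1,0) : ℤ × ℤ) + (0,0) = (1,0) := by simp [Prod.ext_iff]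
    have e2 : ((1,0) : ℤ × ℤ) + (1,0) = (0,0) + (2,0) := by simp [Prod.ext_iff]
    have e3 : ((1,0) : ℤ × ℤ) + (0,1) = (1,1) := by simp [Prod.ext_iff]
    have e4 : ((1,0) : ℤ × ℤ) + (1,1) = (0,1) + (2,0) := by simp [Prod.ext_iff]
    rw [e1, e2, e3, e4, hm_even (0,0) (2,0) rfl rfl, hm_even (0,1) (2,0) rfl rfl]
    congr 1
    abel
  have hν01 : Measure.map (shiftZ2 (0,1)) ν = ν := by
    rw [hνdef, Measure.map_smul,
      Measure.map_add _ _ (measurable_shift _), Measure.map_add _ _ (measurable_shift _),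
      Measure.map_add _ _ (measurable_shift _),
      hm_shift, hm_shift, hm_shift, hm_shift]
    have e1 : ((0,1) : ℤ × ℤ) + (0,0) = (0,1) := by simp [Prod.ext_iff]
    have e2 : ((0,1) : ℤ × ℤ) + (1,0) = (1,1) := by simp [Prod.ext_iff]
    have e3 : ((0,1) : ℤ × ℤ) + (0,1) = (0,0) + (0,2) := by simp [Prod.ext_iff]
    have e4 : ((0,1) : ℤ × ℤ) + (1,1) = (1,0) + (0,2) := by simp [Prod.ext_iff]
    rw [e1, e2, e3, e4, hm_even (0,0) (0,2) rfl rfl, hm_even (1,0) (0,2) rfl rfl]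
    congr 1
    abel
  have hcompν : ∀ (a b : ℤ × ℤ) (ρ : Measure (ℤ × ℤ → A)),
      Measure.map (shiftZ2 a) (Measure.map (shiftZ2 b) ρ) = Measure.map (shiftZ2 (a+b)) ρ := by
    intro a b ρ
    rw [Measure.map_map (measurable_shift a) (measurable_shift b)]
    congr 1
    funext x
    exact shift_shift a b x
  have hν0 : Measure.map (shiftZ2 (0 : ℤ × ℤ)) ν = ν := by rw [hid, Measure.map_id]
  have hνneg : ∀ e : ℤ × ℤ, Measure.map (shiftZ2 e) ν = ν →
      Measure.map (shiftZ2 (-e)) ν = ν := by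
    intro e he
    conv_lhs => rw [← he]
    rw [hcompν, neg_add_cancel, hid, Measure.map_id]
  have hνx : ∀ a : ℤ, Measure.map (shiftZ2 (a, 0)) ν = ν := by
    intro a
    induction a using Int.induction_on with
    | zero => exact hν0
    | succ k ih =>
      have e : ((k : ℤ) + 1, (0:ℤ)) = (1,0) + ((k:ℤ), 0) := by simp [Prod.ext_iff]; ring
      rw [e, ← hcompν, ih, hν10]
    | pred k ih =>
      have e : (-(k : ℤ) - 1, (0:ℤ)) = -(1,0) + (-(k:ℤ), 0) := by simp [Prod.ext_iff]; ring
      rw [e, ← hcompν, ih, hνneg _ hν10]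
  have hνy : ∀ b : ℤ, Measure.map (shiftZ2 (0, b)) ν = ν := by
    intro b
    induction b using Int.induction_on with
    | zero => exact hν0
    | succ k ih =>
      have e : ((0:ℤ), (k : ℤ) + 1) = (0,1) + (0, (k:ℤ)) := by simp [Prod.ext_iff]; ring
      rw [e, ← hcompν, ih, hν01]
    | pred k ih =>
      have e : ((0:ℤ), -(k : ℤ) - 1) = -(0,1) + (0, -(k:ℤ)) := by simp [Prod.ext_iff]; ring
      rw [e, ← hcompν, ih, hνneg _ hν01]
  have hν_inv : ∀ u : ℤ × ℤ, Measure.map (shiftZ2 u) ν = ν := by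
    intro u
    have e : u = (u.1, 0) + (0, u.2) := by ext <;> simp
    rw [e, ← hcompν, hνy, hνx]
  -- value of g on repaired configurations
  have hgφ : ∀ (v : ℤ × ℤ) x, g (shiftZ2 v (φ x)) = -(q (shiftZ2 v (φ x))) := by
    intro v x
    have h0 : penalty Fh Fv (shiftZ2 v (φ x)) = 0 :=
      penalty_zero_of_mem (XF_shift (phi_mem hssf x) v)
    rw [hqdef]
    simp only [h0]
    ring
  -- the key estimate for each of the four shifts
  have IB0 : (0:ℝ) ≤ (μ (Bs Fh Fv)).toReal := ENNReal.toReal_nonneg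
  have key_v : ∀ v : ℤ × ℤ, nrm v ≤ 1 →
      ∫ x, (q (shiftZ2 v (φ x)) - q (shiftZ2 v x)) ∂μ ≤
        K * 512 * (μ (Bs Fh Fv)).toReal := by
    intro v hv
    set D := fun x => q (shiftZ2 v (φ x)) - q (shiftZ2 v x) with hD
    have hDmeas : Measurable D :=
      (hqmeas.comp ((measurable_shift v).comp hφm)).sub (hqmeas.comp (measurable_shift v))
    have hDb : ∀ x, |D x| ≤ C + C := by
      intro x
      calc |D x| ≤ |q (shiftZ2 v (φ x))| + |q (shiftZ2 v x)| := abs_sub _ _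
        _ ≤ C + C := add_le_add (hqb _) (hqb _)
    have hDint : Integrable D μ := int_bdd D (C + C) hDmeas hDb μ inferInstance
    have hfin : (ENNReal.ofReal K * 8) * (64 * μ (Bs Fh Fv)) ≠ ⊤ := by
      apply ENNReal.mul_ne_top
      · exact ENNReal.mul_ne_top ENNReal.ofReal_ne_top (by norm_num)
      · exact ENNReal.mul_ne_top (by norm_num) (measure_ne_top μ _)
    calc ∫ x, D x ∂μ ≤ ∫ x, |D x| ∂μ :=
          integral_mono hDint hDint.abs (fun x => le_abs_self _)
      _ = (∫⁻ x, ENNReal.ofReal |D x| ∂μ).toReal :=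
          integral_eq_lintegral_of_nonneg_ae (ae_of_all _ fun x => abs_nonneg _)
            hDmeas.abs.aestronglyMeasurable
      _ ≤ ((ENNReal.ofReal K * 8) * (64 * μ (Bs Fh Fv))).toReal := by
          apply ENNReal.toReal_mono hfin
          calc ∫⁻ x, ENNReal.ofReal |D x| ∂μ
              ≤ ∫⁻ x, ENNReal.ofReal K * 8 * Pw Fh Fv x ∂μ :=
                lintegral_mono fun x => key_pointwise hssf hK0 hqK hv x
            _ = (ENNReal.ofReal K * 8) * ∫⁻ x, Pw Fh Fv x ∂μ :=
                lintegral_const_mul' _ _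
                  (ENNReal.mul_ne_top ENNReal.ofReal_ne_top (by norm_num))
            _ ≤ (ENNReal.ofReal K * 8) * (64 * μ (Bs Fh Fv)) :=
                mul_le_mul_right (lint_Pw hμinv) _
      _ = K * 512 * (μ (Bs Fh Fv)).toReal := by
          rw [ENNReal.toReal_mul, ENNReal.toReal_mul, ENNReal.toReal_mul,
            ENNReal.toReal_ofReal hK0]
          norm_num
          ring
  -- integrals with respect to μ and ν
  have hq_int : Integrable q μ := int_bdd q C hqmeas hqb μ inferInstance
  have hp_int : Integrable (penalty Fh Fv) μ := int_bdd _ 1 hpmeas hpb μ inferInstance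
  have hpen_val : ∫ x, penalty Fh Fv x ∂μ = -(μ (Bs Fh Fv)).toReal := by
    rw [penalty_eq_indicator (Fh := Fh) (Fv := Fv)]
    rw [integral_indicator_const _ measurable_Bs]
    simp
    rfl
  have hq_shift : ∀ v : ℤ × ℤ, ∫ x, q (shiftZ2 v x) ∂μ = ∫ x, q x ∂μ := by
    intro v
    conv_rhs => rw [← hμinv v]
    rw [integral_map (measurable_shift v).aemeasurable hqmeas.aestronglyMeasurable]
  have hqφ_int : ∀ v : ℤ × ℤ, Integrable (fun x => q (shiftZ2 v (φ x))) μ := by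
    intro v
    exact int_bdd _ C (hqmeas.comp ((measurable_shift v).comp hφm))
      (fun x => hqb _) μ inferInstance
  have hqσ_int : ∀ v : ℤ × ℤ, Integrable (fun x => q (shiftZ2 v x)) μ := by
    intro v
    exact int_bdd _ C (hqmeas.comp (measurable_shift v)) (fun x => hqb _) μ inferInstance
  -- compute ∫ g dν
  have hint_m : ∀ v : ℤ × ℤ, ∫ y, g y ∂(m v) = -∫ x, q (shiftZ2 v (φ x)) ∂μ := by
    intro v
    rw [hmdef]
    rw [integral_map (hcomp_meas v).aemeasurable hgmeas.aestronglyMeasurable]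
    have : ∀ x, g ((shiftZ2 v ∘ φ) x) = -(q (shiftZ2 v (φ x))) := fun x => hgφ v x
    rw [integral_congr_ae (ae_of_all _ this), integral_neg]
  have hg_int_m : ∀ v, Integrable g (m v) := by
    intro v
    haveI := hm_prob v
    exact int_bdd g (1 + C) hgmeas hgb (m v) inferInstance
  have hν_val : ∫ y, g y ∂ν = (1/4 : ℝ) *
      ((∫ y, g y ∂(m (0,0))) + (∫ y, g y ∂(m (1,0))) +
        (∫ y, g y ∂(m (0,1))) + (∫ y, g y ∂(m (1,1)))) := by
    rw [hνdef, integral_smul_measure]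
    rw [integral_add_measure (((hg_int_m (0,0)).add_measure (hg_int_m (1,0))).add_measure
        (hg_int_m (0,1))) (hg_int_m (1,1)),
      integral_add_measure ((hg_int_m (0,0)).add_measure (hg_int_m (1,0))) (hg_int_m (0,1)),
      integral_add_measure (hg_int_m (0,0)) (hg_int_m (1,0))]
    have : ((4:ℝ≥0∞)⁻¹).toReal = (1/4 : ℝ) := by
      rw [ENNReal.toReal_inv]; norm_num
    rw [this, smul_eq_mul]
  -- assemble
  have hmax' := hmax ν hν_prob hν_inv
  have hgμ_val : ∫ x, g x ∂μ = -(μ (Bs Fh Fv)).toReal - ∫ x, q x ∂μ := by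
    have h : (fun x => g x) = fun x => penalty Fh Fv x - q x := by
      funext x; rw [hqdef]; ring
    rw [h, integral_sub hp_int hq_int, hpen_val]
  set IB := (μ (Bs Fh Fv)).toReal with hIB
  set Q := ∫ x, q x ∂μ with hQ
  have hEQ : ∀ v : ℤ × ℤ, nrm v ≤ 1 →
      ∫ x, q (shiftZ2 v (φ x)) ∂μ ≤ Q + K * 512 * IB := by
    intro v hv
    have h := key_v v hv
    rw [integral_sub (hqφ_int v) (hqσ_int v), hq_shift v] at h
    linarith
  have hnrm00 : nrm ((0,0) : ℤ × ℤ) ≤ 1 := by simp [nrm]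
  have hnrm10 : nrm ((1,0) : ℤ × ℤ) ≤ 1 := by simp [nrm]
  have hnrm01 : nrm ((0,1) : ℤ × ℤ) ≤ 1 := by simp [nrm]
  have hnrm11 : nrm ((1,1) : ℤ × ℤ) ≤ 1 := by simp [nrm]
  have hfinal : IB ≤ K * 512 * IB := by
    have h0 := hEQ (0,0) hnrm00
    have h1 := hEQ (1,0) hnrm10
    have h2 := hEQ (0,1) hnrm01
    have h3 := hEQ (1,1) hnrm11
    have hν_le := hmax'
    rw [hν_val, hgμ_val, hint_m, hint_m, hint_m, hint_m] at hν_le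
    linarith
  have hKlt : K < 1/1024 := by linarith
  have hIB_zero : IB = 0 := by nlinarith
  have hμB0 : μ (Bs Fh Fv) = 0 := by
    rcases (ENNReal.toReal_eq_zero_iff _).mp hIB_zero with h | h
    · exact h
    · exact absurd h (measure_ne_top μ _)
  have hcompl : (XF Fh Fv)ᶜ ⊆ ⋃ u : ℤ × ℤ, (shiftZ2 u) ⁻¹' (Bs Fh Fv) := by
    intro x hx
    simp only [XF, Set.mem_compl_iff, Set.mem_setOf_eq] at hx
    push_neg at hx
    obtain ⟨u, hu⟩ := hx
    have hb : badAt Fh Fv x u := by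
      unfold badAt
      tauto
    exact Set.mem_iUnion.mpr ⟨u, (badAt_iff_shift_mem x u).mp hb⟩
  apply measure_mono_null hcompl
  apply measure_iUnion_null
  intro u
  rw [← Measure.map_apply (measurable_shift u) measurable_Bs, hμinv u]
  exact hμB0
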